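/- Let R = ⊕_{g∈G} R_g be a G-graded ring in which every idempotent and every nilpotent element is homogeneous. If the group ring R[G], graded by (R[G])_g = Σ_{h∈G} R_{gh^{-1}} h, is graded nil clean, then R is graded nil clean. -/

import Mathlib

/-- A `G`-grading of a ring `R`: a family of additive subgroups `C g` with
`C g * C h ⊆ C (g*h)`, `1 ∈ C e`, and `R = ⊕_g C g` (internal direct sum). -/
structure Grading (G : Type*) [Group G] [DecidableEq G] (R : Type*) [Ring R] where
  C : G → AddSubgroup R
  one_mem : (1 : R) ∈ C 1
  mul_mem : ∀ {g h : G} {a b : R}, a ∈ C g → b ∈ C h → a * b ∈ C (g * h)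
  isInternal : DirectSum.IsInternal C

namespace Grading

variable {G : Type*} [Group G] [DecidableEq G] {R : Type*} [Ring R]

/-- An element is homogeneous if it lies in some component. -/
def Homogeneous (A : Grading G R) (a : R) : Prop := ∃ g, a ∈ A.C g

/-- A homogeneous element is graded nil clean if it is the sum of a homogeneous
idempotent and a homogeneous nilpotent. -/
def IsGradedNilClean (A : Grading G R) (a : R) : Prop :=
  ∃ f b : R, A.Homogeneous f ∧ IsIdempotentElem f ∧ A.Homogeneous b ∧
    IsNilpotent b ∧ a = f + b

/-- A graded ring is graded nil clean if every homogeneous element is. -/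
def GradedNilClean (A : Grading G R) : Prop :=
  ∀ a : R, A.Homogeneous a → A.IsGradedNilClean a

/-- Graded strongly nil clean element: the idempotent and nilpotent commute. -/
def IsGradedStronglyNilClean (A : Grading G R) (a : R) : Prop :=
  ∃ f b : R, A.Homogeneous f ∧ IsIdempotentElem f ∧ A.Homogeneous b ∧
    IsNilpotent b ∧ f * b = b * f ∧ a = f + b

def GradedStronglyNilClean (A : Grading G R) : Prop :=
  ∀ a : R, A.Homogeneous a → A.IsGradedStronglyNilClean a

end Grading

/-- Let `R` be a `G`-graded ring in which every idempotent and every nilpotent is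
homogeneous.  Let `A` be the twisted group ring `R[G]`, i.e. a ring with an
additive isomorphism `ε : (G →₀ R) ≃+ A` realizing the twisted multiplication
`(r_g g')(r_h h') = r_g r_h (h⁻¹ g' h h')`, equipped with the `G`-grading
`(R[G])_k = Σ_h R_{k h⁻¹} h`.  If `R[G]` is graded nil clean, then `R` is graded
nil clean. -/
theorem stmt16 {G : Type*} [Group G] [DecidableEq G] {R : Type*} [Ring R]
    {A : Type*} [Ring A]
    (𝒜 : Grading G R) (ℬ : Grading G A) (ε : (G →₀ R) ≃+ A)
    (hone : ε (Finsupp.single (1 : G) (1 : R)) = 1)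
    (hmul : ∀ (g h g' h' : G) (r s : R), r ∈ 𝒜.C g → s ∈ 𝒜.C h →
      ε (Finsupp.single g' r) * ε (Finsupp.single h' s) =
        ε (Finsupp.single (h⁻¹ * g' * h * h') (r * s)))
    (hgrade : ∀ (k : G) (a : A), a ∈ ℬ.C k ↔
      ∃ x : G →₀ R, ε x = a ∧ ∀ h : G, x h ∈ 𝒜.C (k * h⁻¹))
    (hidem : ∀ x : R, IsIdempotentElem x → 𝒜.Homogeneous x)
    (hnilp : ∀ x : R, IsNilpotent x → 𝒜.Homogeneous x)
    (hB : ℬ.GradedNilClean) : 𝒜.GradedNilClean := by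
  classical
  set T : (G →₀ R) →+ R := Finsupp.liftAddHom (fun _ => AddMonoidHom.id R) with hTdef
  have hTsingle : ∀ (g : G) (r : R), T (Finsupp.single g r) = r := by
    intro g r; simp [hTdef]
  have hTsum : ∀ w : G →₀ R, T w = w.sum fun _ r => r := by
    intro w; simp only [hTdef, Finsupp.liftAddHom_apply]; rfl
  have hεinj : Function.Injective ε := ε.injective
  -- components intersect trivially
  have hdisj : ∀ (k l : G) (c : A), k ≠ l → c ∈ ℬ.C k → c ∈ ℬ.C l → c = 0 := by
    intro k l c hkl hk hl
    have hinj := ℬ.isInternal.injective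
    have h1 : (DirectSum.coeAddMonoidHom ℬ.C) (DirectSum.of (fun i => ℬ.C i) k ⟨c, hk⟩) =
        (DirectSum.coeAddMonoidHom ℬ.C) (DirectSum.of (fun i => ℬ.C i) l ⟨c, hl⟩) := by
      simp
    have h2 := hinj h1
    have h3 := congrArg (fun u => u k) h2
    simp only [DirectSum.of_eq_same] at h3
    rw [DirectSum.of_eq_of_ne l k _ hkl] at h3
    exact Subtype.ext_iff.mp h3
  have e1 : ∀ w : G →₀ R, ε w = w.sum fun g r => ε (Finsupp.single g r) := by
    intro w
    rw [← map_finsuppSum, Finsupp.sum_single]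
  -- key multiplication lemma
  have hkey : ∀ x y : G →₀ R, (∀ h, x h ∈ 𝒜.C h⁻¹) → (∀ h, y h ∈ 𝒜.C h⁻¹) →
      ∃ z : G →₀ R, ε z = ε x * ε y ∧ (∀ h, z h ∈ 𝒜.C h⁻¹) ∧ T z = T x * T y := by
    intro x y hx hy
    refine ⟨x.sum fun h₁ r => y.sum fun h₂ s => Finsupp.single (h₂ * h₁) (r * s), ?_, ?_, ?_⟩
    · rw [e1 x, e1 y, Finsupp.sum_mul, map_finsuppSum]
      refine Finsupp.sum_congr ?_
      intro h₁ _
      rw [Finsupp.mul_sum, map_finsuppSum]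
      refine Finsupp.sum_congr ?_
      intro h₂ _
      rw [hmul h₁⁻¹ h₂⁻¹ h₁ h₂ _ _ (hx h₁) (hy h₂)]
      congr 2
      group
    · intro h
      rw [Finsupp.sum_apply]
      refine AddSubgroup.sum_mem _ ?_
      intro h₁ _
      show (y.sum fun h₂ s => Finsupp.single (h₂ * h₁) (x h₁ * s)) h ∈ _
      rw [Finsupp.sum_apply]
      refine AddSubgroup.sum_mem _ ?_
      intro h₂ _
      show (Finsupp.single (h₂ * h₁) (x h₁ * y h₂)) h ∈ _
      rw [Finsupp.single_apply]
      split
      · next heq =>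
        subst heq
        have := 𝒜.mul_mem (hx h₁) (hy h₂)
        rwa [mul_inv_rev]
      · exact (𝒜.C h⁻¹).zero_mem
    · rw [map_finsuppSum]
      have : (x.sum fun h₁ r => T (y.sum fun h₂ s => Finsupp.single (h₂ * h₁) (r * s)))
          = x.sum fun h₁ r => y.sum fun h₂ s => r * s := by
        refine Finsupp.sum_congr ?_
        intro h₁ _
        rw [map_finsuppSum]
        refine Finsupp.sum_congr ?_
        intro h₂ _
        rw [hTsingle]
      rw [this, hTsum x, hTsum y, Finsupp.sum_mul]
      refine Finsupp.sum_congr ?_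
      intro h₁ _
      rw [Finsupp.mul_sum]
  intro a ha
  obtain ⟨g, hag⟩ := ha
  have hx₀ : ∀ h : G, (Finsupp.single g⁻¹ a : G →₀ R) h ∈ 𝒜.C ((1:G) * h⁻¹) := by
    intro h
    rw [Finsupp.single_apply, one_mul]
    split
    · next heq => subst heq; simpa using hag
    · exact (𝒜.C h⁻¹).zero_mem
  have hα : ε (Finsupp.single g⁻¹ a) ∈ ℬ.C 1 := (hgrade 1 _).2 ⟨_, rfl, hx₀⟩
  obtain ⟨f, b, ⟨k, hfk⟩, hfi, ⟨l, hbl⟩, hbn, hsum⟩ := hB _ ⟨1, hα⟩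
  have hf1 : f ∈ ℬ.C 1 := by
    by_cases hk : k = 1
    · exact hk ▸ hfk
    · have hkk : f ∈ ℬ.C (k*k) := hfi ▸ ℬ.mul_mem hfk hfk
      have hne : k ≠ k * k := by
        intro h
        apply hk
        have : k * 1 = k * k := by rw [mul_one]; exact h
        exact (mul_left_cancel this).symm
      have hf0 : f = 0 := hdisj k (k*k) f hne hfk hkk
      rw [hf0]; exact (ℬ.C 1).zero_mem
  have hb1 : b ∈ ℬ.C 1 := by
    have hb : b = ε (Finsupp.single g⁻¹ a) - f := by rw [hsum, add_sub_cancel_left]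
    rw [hb]; exact AddSubgroup.sub_mem _ hα hf1
  obtain ⟨xf, hεxf, hxf'⟩ := (hgrade 1 f).1 hf1
  obtain ⟨yb, hεyb, hyb'⟩ := (hgrade 1 b).1 hb1
  have hxf : ∀ h, xf h ∈ 𝒜.C h⁻¹ := fun h => by simpa using hxf' h
  have hyb : ∀ h, yb h ∈ 𝒜.C h⁻¹ := fun h => by simpa using hyb' h
  -- idempotent part
  obtain ⟨z, hz1, _, hz3⟩ := hkey xf xf hxf hxf
  have hzxf : z = xf := hεinj (by rw [hz1, hεxf]; exact hfi)
  have hFidem : IsIdempotentElem (T xf) := by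
    rw [IsIdempotentElem, ← hz3, hzxf]
  -- nilpotent part
  have hpow : ∀ n : ℕ, ∃ z : G →₀ R, ε z = b ^ n ∧ (∀ h, z h ∈ 𝒜.C h⁻¹) ∧
      T z = (T yb) ^ n := by
    intro n
    induction n with
    | zero =>
      refine ⟨Finsupp.single 1 1, by rw [pow_zero]; exact hone, ?_, by
        rw [hTsingle, pow_zero]⟩
      intro h
      rw [Finsupp.single_apply]
      split
      · next heq => subst heq; rw [inv_one]; exact 𝒜.one_mem
      · exact (𝒜.C h⁻¹).zero_mem
    | succ n ih =>
      obtain ⟨z, h1, h2, h3⟩ := ih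
      obtain ⟨w, g1, g2, g3⟩ := hkey z yb h2 hyb
      exact ⟨w, by rw [g1, h1, hεyb, pow_succ], g2, by rw [g3, h3, pow_succ]⟩
  obtain ⟨n, hbn'⟩ := hbn
  obtain ⟨z', hz'1, _, hz'3⟩ := hpow n
  have hz'0 : z' = 0 := hεinj (by rw [hz'1, hbn', map_zero])
  have hN : (T yb) ^ n = 0 := by rw [← hz'3, hz'0, map_zero]
  -- sum
  have hxy : xf + yb = Finsupp.single g⁻¹ a := hεinj (by rw [map_add, hεxf, hεyb, ← hsum])
  have hsumR : T xf + T yb = a := by rw [← map_add, hxy, hTsingle]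
  exact ⟨T xf, T yb, hidem _ hFidem, hFidem, hnilp _ ⟨n, hN⟩, ⟨n, hN⟩, hsumR.symm⟩
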